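/- Let G be a group with lower central series γ₁ = G, γ₂ = [G,G], γ₃ = [γ₂, G]. Let V = G/γ₂ and W = γ₂/γ₃ (abelian groups, written additively), and let b : V × V → W be the ℤ-bilinear alternating map induced by the group commutator. Let A = Adj(b) = {(X,Y) ∈ End(V) × End(V) : b(Xu, v) = b(u, Yv) for all u, v ∈ V}, a subring of End(V) × End(V)^op, and let J be the Jacobson radical of A. For i ∈ ℕ let V·J^i denote the additive subgroup of V generated by {Xu : u ∈ V, (X,Y) ∈ J^i}, and let H be the preimage of V·J^i under the quotient map G → G/γ₂. Then: (a) H is a characteristic subgroup of G, i.e. α(H) = H for every automorphism α of G; and (b) if J^{2i} = 0 then [H, H] ≤ γ₃. -/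

import Mathlib

/-- The adjoint ring of a biadditive map `b : V × V → W`, as a subring of
`End(V) × End(V)ᵒᵖ`. -/
def AdjointRing {V W : Type*} [AddCommGroup V] [AddCommGroup W]
    (b : V →+ V →+ W) : Subring (AddMonoid.End V × (AddMonoid.End V)ᵐᵒᵖ) where
  carrier := {P | ∀ u v : V, b (P.1 u) v = b u (P.2.unop v)}
  zero_mem' := by intro u v; simp
  one_mem' := by intro u v; simp
  add_mem' := by
    intro P Q hP hQ u v
    have h1 : (P + Q).1 u = P.1 u + Q.1 u := rfl
    have h2 : (P + Q).2.unop v = P.2.unop v + Q.2.unop v := rfl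
    rw [h1, h2, map_add, AddMonoidHom.add_apply, map_add, hP u v, hQ u v]
  neg_mem' := by
    intro P hP u v
    have h1 : (-P).1 u = -(P.1 u) := rfl
    have h2 : (-P).2.unop v = -(P.2.unop v) := rfl
    rw [h1, h2, map_neg, AddMonoidHom.neg_apply, map_neg, hP u v]
  mul_mem' := by
    intro P Q hP hQ u v
    have h1 : (P * Q).1 u = P.1 (Q.1 u) := rfl
    have h2 : (P * Q).2.unop v = Q.2.unop (P.2.unop v) := rfl
    rw [h1, h2, hP (Q.1 u) v, hQ u (P.2.unop v)]

/-- Powers of an ideal of a (possibly noncommutative) ring, as additive subgroups: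
`J^0 = A` and `J^{i+1} = J^i·J`. -/
def idealPow {A : Type*} [Ring A] (J : Ideal A) : ℕ → AddSubgroup A
  | 0 => ⊤
  | n + 1 => AddSubgroup.closure {z | ∃ x ∈ idealPow J n, ∃ y ∈ J, z = x * y}

variable {G : Type*} [Group G]

/-- `γ₃ = [γ₂, G]`. -/
def gammaThree (G : Type*) [Group G] : Subgroup G := ⁅commutator G, ⊤⁆

instance : (gammaThree G).Normal := by
  unfold gammaThree; infer_instance

instance : ((gammaThree G).subgroupOf (commutator G)).Normal :=
  Subgroup.Normal.subgroupOf inferInstance _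

open scoped commutatorElement in
/-- `γ₂/γ₃` is an abelian group. -/
instance : CommGroup (↥(commutator G) ⧸ (gammaThree G).subgroupOf (commutator G)) :=
  { (inferInstance : Group _) with
    mul_comm := fun a b =>
      QuotientGroup.induction_on a fun x =>
        QuotientGroup.induction_on b fun y => by
          rw [← QuotientGroup.mk_mul, ← QuotientGroup.mk_mul, QuotientGroup.eq,
            Subgroup.mem_subgroupOf]
          have key : (((x * y)⁻¹ * (y * x) : ↥(commutator G)) : G) =
              ⁅((y : G))⁻¹, ((x : G))⁻¹⁆ := by
            simp [commutatorElement_def, mul_inv_rev, mul_assoc]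
          rw [key]
          exact Subgroup.commutator_mem_commutator (inv_mem y.2) (Subgroup.mem_top _) }

/-- `V = G/γ₂`, written additively. -/
abbrev VAb (G : Type*) [Group G] := Additive (Abelianization G)

/-- `W = γ₂/γ₃`, written additively. -/
abbrev WAb (G : Type*) [Group G] :=
  Additive (↥(commutator G) ⧸ (gammaThree G).subgroupOf (commutator G))

/-- The commutator `[x,y] = x⁻¹y⁻¹xy` lies in `γ₂`. -/
lemma pcomm_mem_commutator (x y : G) : x⁻¹ * y⁻¹ * x * y ∈ commutator G := by
  have h := Subgroup.commutator_mem_commutator (Subgroup.mem_top x⁻¹) (Subgroup.mem_top y⁻¹)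
  rw [commutator_def]
  simpa [commutatorElement_def, mul_assoc] using h

/-- `b` is induced by the group commutator. -/
def InducedByCommutator (b : VAb G →+ VAb G →+ WAb G) : Prop :=
  ∀ x y : G,
    b (Additive.ofMul (Abelianization.of x)) (Additive.ofMul (Abelianization.of y)) =
      Additive.ofMul
        (QuotientGroup.mk (⟨x⁻¹ * y⁻¹ * x * y, pcomm_mem_commutator x y⟩ : ↥(commutator G)))

/-- `V·J^i`: the additive subgroup of `V` generated by `{Xu : u ∈ V, (X,Y) ∈ J^i}`,
where `J` is the Jacobson radical of the adjoint ring of `b`. -/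
def VJ (b : VAb G →+ VAb G →+ WAb G) (i : ℕ) : AddSubgroup (VAb G) :=
  AddSubgroup.closure
    {w | ∃ P : ↥(AdjointRing b),
      P ∈ idealPow (⊥ : Ideal ↥(AdjointRing b)).jacobson i ∧ ∃ u, w = P.val.1 u}

/-- `H`: the preimage of `V·J^i` in `G`. -/
def Hsub (b : VAb G →+ VAb G →+ WAb G) (i : ℕ) : Subgroup G :=
  Subgroup.comap (Abelianization.of : G →* Abelianization G)
    (AddSubgroup.toSubgroup' (VJ b i))

/-! ### Auxiliary lemmas -/

section JacLemmas
variable {R : Type*} [Ring R]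

lemma exists_left_inv_of_mem_jac {a : R} (h : a ∈ (⊥ : Ideal R).jacobson) :
    ∃ z : R, z * (1 + a) = 1 := by
  obtain ⟨z, hz⟩ := Ideal.mem_jacobson_iff.mp h 1
  rw [Ideal.mem_bot, sub_eq_zero] at hz
  refine ⟨z, ?_⟩
  rw [mul_one_add]
  rw [mul_one] at hz
  rw [add_comm] at hz
  exact hz

lemma isUnit_one_add_of_mem_jac {a : R} (h : a ∈ (⊥ : Ideal R).jacobson) :
    IsUnit (1 + a) := by
  obtain ⟨z, hz⟩ := exists_left_inv_of_mem_jac h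
  have hz' : z = 1 + -(z * a) := by
    have h1 : z + z * a = 1 := by rw [← mul_one_add]; exact hz
    have h2 : z = 1 - z * a := eq_sub_of_add_eq h1
    rw [sub_eq_add_neg] at h2
    exact h2
  have h2 : -(z * a) ∈ (⊥ : Ideal R).jacobson :=
    neg_mem (Ideal.mul_mem_left _ z h)
  obtain ⟨w, hw⟩ := exists_left_inv_of_mem_jac h2
  rw [← hz'] at hw
  have hwz : w = 1 + a := by
    calc w = w * (z * (1 + a)) := by rw [hz, mul_one]
    _ = (w * z) * (1 + a) := by rw [mul_assoc]
    _ = 1 + a := by rw [hw, one_mul]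
  refine ⟨⟨1 + a, z, ?_, hz⟩, rfl⟩
  rw [← hwz]; exact hw

lemma mem_jac_of_forall_isUnit {x : R} (h : ∀ y : R, IsUnit (y * x + 1)) :
    x ∈ (⊥ : Ideal R).jacobson := by
  rw [Ideal.mem_jacobson_iff]
  intro y
  obtain ⟨u, hu⟩ := h y
  refine ⟨↑u⁻¹, ?_⟩
  rw [Ideal.mem_bot, sub_eq_zero]
  have h1 : (↑u⁻¹ : R) * (y * x + 1) = 1 := by rw [← hu]; exact u.inv_mul
  calc (↑u⁻¹ : R) * y * x + ↑u⁻¹ = (↑u⁻¹ : R) * (y * x + 1) := by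
        rw [mul_add, mul_one, mul_assoc]
    _ = 1 := h1

lemma isUnit_one_add_swap {a c : R} (h : IsUnit (1 + a * c)) : IsUnit (1 + c * a) := by
  obtain ⟨u, hu⟩ := h
  set v : R := ↑u⁻¹ with hv
  have h1 : v * (1 + a * c) = 1 := by rw [← hu]; exact u.inv_mul
  have h2 : (1 + a * c) * v = 1 := by rw [← hu]; exact u.mul_inv
  refine ⟨⟨1 + c * a, 1 - c * v * a, ?_, ?_⟩, rfl⟩
  · have e : (1 + c * a) * (1 - c * v * a) = 1 + c * a - c * (((1 + a * c) * v) * a) := by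
      noncomm_ring
    rw [h2, one_mul] at e
    rw [e]; abel
  · have e : (1 - c * v * a) * (1 + c * a) = 1 + c * a - c * ((v * (1 + a * c)) * a) := by
      noncomm_ring
    rw [h1, one_mul] at e
    rw [e]; abel

lemma jac_mul_right {x : R} (hx : x ∈ (⊥ : Ideal R).jacobson) (a : R) :
    x * a ∈ (⊥ : Ideal R).jacobson := by
  apply mem_jac_of_forall_isUnit
  intro y
  have h1 : IsUnit (1 + a * (y * x)) :=
    isUnit_one_add_of_mem_jac (Ideal.mul_mem_left _ a (Ideal.mul_mem_left _ y hx))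
  have h2 : IsUnit (1 + (y * x) * a) := isUnit_one_add_swap h1
  have h3 : y * (x * a) + 1 = 1 + (y * x) * a := by noncomm_ring
  rw [h3]; exact h2

lemma mul_mem_idealPow_succ {J : Ideal R} {n : ℕ} {x y : R}
    (hx : x ∈ idealPow J n) (hy : y ∈ J) : x * y ∈ idealPow J (n + 1) :=
  AddSubgroup.subset_closure ⟨x, hx, y, hy, rfl⟩

lemma mem_idealPow_one_of_mem {J : Ideal R} {y : R} (hy : y ∈ J) : y ∈ idealPow J 1 := by
  have h1 : (1 : R) ∈ idealPow J 0 := by rw [idealPow]; trivial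
  simpa using mul_mem_idealPow_succ h1 hy

lemma idealPow_succ_mul_right {n : ℕ} {x : R}
    (hx : x ∈ idealPow ((⊥ : Ideal R).jacobson) (n + 1)) (a : R) :
    x * a ∈ idealPow ((⊥ : Ideal R).jacobson) (n + 1) := by
  revert x
  have key : idealPow ((⊥ : Ideal R).jacobson) (n + 1) ≤
      AddSubgroup.comap (AddMonoidHom.mulRight a) (idealPow ((⊥ : Ideal R).jacobson) (n + 1)) := by
    rw [idealPow, AddSubgroup.closure_le]
    rintro _ ⟨z, hz, w, hw, rfl⟩
    simp only [SetLike.mem_coe, AddSubgroup.mem_comap]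
    show z * w * a ∈ _
    rw [mul_assoc]
    exact mul_mem_idealPow_succ hz (jac_mul_right hw a)
  exact fun x hx => key hx

lemma mul_mem_idealPow {n m : ℕ} {x y : R}
    (hx : x ∈ idealPow ((⊥ : Ideal R).jacobson) n)
    (hy : y ∈ idealPow ((⊥ : Ideal R).jacobson) m) :
    x * y ∈ idealPow ((⊥ : Ideal R).jacobson) (n + m) := by
  induction m generalizing y with
  | zero =>
    cases n with
    | zero => exact AddSubgroup.mem_top _
    | succ k => exact idealPow_succ_mul_right hx y
  | succ m ih =>
    revert y
    have key : idealPow ((⊥ : Ideal R).jacobson) (m + 1) ≤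
        AddSubgroup.comap (AddMonoidHom.mulLeft x)
          (idealPow ((⊥ : Ideal R).jacobson) (n + (m + 1))) := by
      rw [idealPow, AddSubgroup.closure_le]
      rintro _ ⟨z, hz, w, hw, rfl⟩
      simp only [SetLike.mem_coe, AddSubgroup.mem_comap]
      show x * (z * w) ∈ _
      rw [← mul_assoc]
      exact mul_mem_idealPow_succ (ih hz) hw
    exact fun y hy => key hy

end JacLemmas

section GroupSide
variable {G : Type*} [Group G]

lemma exists_of_rep (u : VAb G) : ∃ x : G, Additive.ofMul (Abelianization.of x) = u := by
  obtain ⟨x, hx⟩ := Quotient.exists_rep (Additive.toMul u)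
  exact ⟨x, hx⟩

lemma adj_prop {b : VAb G →+ VAb G →+ WAb G} (P : ↥(AdjointRing b)) :
    ∀ u v : VAb G, b (P.val.1 u) v = b u (P.val.2.unop v) := P.2

lemma b_skew {b : VAb G →+ VAb G →+ WAb G} (hb : InducedByCommutator b) (u v : VAb G) :
    b u v = - b v u := by
  obtain ⟨x, rfl⟩ := exists_of_rep u
  obtain ⟨y, rfl⟩ := exists_of_rep v
  rw [hb x y, hb y x, ← ofMul_inv]
  apply congrArg Additive.ofMul
  rw [← QuotientGroup.mk_inv]
  apply congrArg QuotientGroup.mk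
  ext
  show x⁻¹ * y⁻¹ * x * y = (y⁻¹ * x⁻¹ * y * x)⁻¹
  group

def sigmaA {b : VAb G →+ VAb G →+ WAb G} (hb : InducedByCommutator b)
    (P : ↥(AdjointRing b)) : ↥(AdjointRing b) :=
  ⟨(P.val.2.unop, MulOpposite.op P.val.1), by
    intro u v
    show b (P.val.2.unop u) v = b u (P.val.1 v)
    calc b (P.val.2.unop u) v = - b v (P.val.2.unop u) := b_skew hb _ _
      _ = - b (P.val.1 v) u := by rw [adj_prop P v u]
      _ = b u (P.val.1 v) := (b_skew hb u _).symm⟩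

variable {b : VAb G →+ VAb G →+ WAb G} (hb : InducedByCommutator b)

lemma sigma_add (P Q : ↥(AdjointRing b)) :
    sigmaA hb (P + Q) = sigmaA hb P + sigmaA hb Q := rfl

lemma sigma_zero : sigmaA hb (0 : ↥(AdjointRing b)) = 0 := rfl

lemma sigma_one : sigmaA hb (1 : ↥(AdjointRing b)) = 1 := rfl

lemma sigma_mul (P Q : ↥(AdjointRing b)) :
    sigmaA hb (P * Q) = sigmaA hb Q * sigmaA hb P := rfl

def sigmaHom : ↥(AdjointRing b) →+ ↥(AdjointRing b) where
  toFun := sigmaA hb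
  map_zero' := rfl
  map_add' := sigma_add hb

lemma isUnit_sigma {P : ↥(AdjointRing b)} (h : IsUnit P) : IsUnit (sigmaA hb P) := by
  obtain ⟨⟨q, qi, h1, h2⟩, rfl⟩ := h
  exact ⟨⟨sigmaA hb q, sigmaA hb qi,
    by rw [← sigma_mul, h2, sigma_one], by rw [← sigma_mul, h1, sigma_one]⟩, rfl⟩

lemma sigma_mem_jac {P : ↥(AdjointRing b)}
    (h : P ∈ (⊥ : Ideal ↥(AdjointRing b)).jacobson) :
    sigmaA hb P ∈ (⊥ : Ideal ↥(AdjointRing b)).jacobson := by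
  apply mem_jac_of_forall_isUnit
  intro y
  have h1 : P * sigmaA hb y ∈ (⊥ : Ideal ↥(AdjointRing b)).jacobson :=
    jac_mul_right h _
  have h2 : IsUnit (1 + P * sigmaA hb y) := isUnit_one_add_of_mem_jac h1
  have h3 : IsUnit (P * sigmaA hb y + 1) := by rwa [add_comm] at h2
  have h4 := isUnit_sigma hb h3
  rw [sigma_add, sigma_mul, sigma_one] at h4
  have h5 : sigmaA hb (sigmaA hb y) = y := rfl
  rwa [h5] at h4

lemma sigma_mem_idealPow {i : ℕ} {P : ↥(AdjointRing b)}
    (h : P ∈ idealPow (⊥ : Ideal ↥(AdjointRing b)).jacobson i) :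
    sigmaA hb P ∈ idealPow (⊥ : Ideal ↥(AdjointRing b)).jacobson i := by
  induction i generalizing P with
  | zero => exact AddSubgroup.mem_top _
  | succ n ih =>
    revert P
    have key : idealPow (⊥ : Ideal ↥(AdjointRing b)).jacobson (n + 1) ≤
        AddSubgroup.comap (sigmaHom hb)
          (idealPow (⊥ : Ideal ↥(AdjointRing b)).jacobson (n + 1)) := by
      rw [idealPow, AddSubgroup.closure_le]
      rintro _ ⟨z, hz, w, hw, rfl⟩
      simp only [SetLike.mem_coe, AddSubgroup.mem_comap]
      show sigmaA hb (z * w) ∈ _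
      rw [sigma_mul]
      have h1 : sigmaA hb w ∈ idealPow (⊥ : Ideal ↥(AdjointRing b)).jacobson 1 :=
        mem_idealPow_one_of_mem (sigma_mem_jac hb hw)
      have h2 := mul_mem_idealPow h1 (ih hz)
      rwa [add_comm] at h2
    exact fun P hP => key hP

include hb

lemma key_vanish {i : ℕ}
    (h2i : idealPow (⊥ : Ideal ↥(AdjointRing b)).jacobson (2 * i) = ⊥)
    {P Q : ↥(AdjointRing b)}
    (hP : P ∈ idealPow (⊥ : Ideal ↥(AdjointRing b)).jacobson i)
    (hQ : Q ∈ idealPow (⊥ : Ideal ↥(AdjointRing b)).jacobson i) (u v : VAb G) :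
    b (P.val.1 u) (Q.val.1 v) = 0 := by
  have hprod : sigmaA hb Q * P ∈ idealPow (⊥ : Ideal ↥(AdjointRing b)).jacobson (2 * i) := by
    rw [two_mul]
    exact mul_mem_idealPow (sigma_mem_idealPow hb hQ) hP
  rw [h2i, AddSubgroup.mem_bot] at hprod
  have hcomp : P.val.2.unop (Q.val.1 v) = 0 := by
    have h1 : (sigmaA hb Q * P).val.2.unop v = P.val.2.unop (Q.val.1 v) := rfl
    rw [hprod] at h1
    exact h1.symm.trans rfl
  rw [adj_prop P u (Q.val.1 v), hcomp, map_zero]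

lemma vj_vanish {i : ℕ}
    (h2i : idealPow (⊥ : Ideal ↥(AdjointRing b)).jacobson (2 * i) = ⊥) :
    ∀ w ∈ VJ b i, ∀ w' ∈ VJ b i, b w w' = 0 := by
  have step1 : ∀ Q : ↥(AdjointRing b), Q ∈ idealPow (⊥ : Ideal ↥(AdjointRing b)).jacobson i →
      ∀ v : VAb G, ∀ w ∈ VJ b i, b w (Q.val.1 v) = 0 := by
    intro Q hQ v
    have key : VJ b i ≤ AddSubgroup.comap (b.flip (Q.val.1 v)) ⊥ := by
      rw [VJ, AddSubgroup.closure_le]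
      rintro _ ⟨P, hP, u, rfl⟩
      simp only [SetLike.mem_coe, AddSubgroup.mem_comap, AddSubgroup.mem_bot]
      show b (P.val.1 u) (Q.val.1 v) = 0
      exact key_vanish hb h2i hP hQ u v
    intro w hw
    have h := key hw
    rw [AddSubgroup.mem_comap, AddSubgroup.mem_bot] at h
    exact h
  intro w hw
  have key2 : VJ b i ≤ AddSubgroup.comap (b w) ⊥ := by
    rw [VJ, AddSubgroup.closure_le]
    rintro _ ⟨Q, hQ, v, rfl⟩
    simp only [SetLike.mem_coe, AddSubgroup.mem_comap, AddSubgroup.mem_bot]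
    exact step1 Q hQ v w hw
  intro w' hw'
  have h := key2 hw'
  rw [AddSubgroup.mem_comap, AddSubgroup.mem_bot] at h
  exact h

omit hb in
lemma mem_Hsub {i : ℕ} {g : G} :
    g ∈ Hsub b i ↔ Additive.ofMul (Abelianization.of g) ∈ VJ b i := Iff.rfl

lemma partB {i : ℕ}
    (h2i : idealPow (⊥ : Ideal ↥(AdjointRing b)).jacobson (2 * i) = ⊥) :
    ⁅Hsub b i, Hsub b i⁆ ≤ gammaThree G := by
  rw [Subgroup.commutator_le]
  intro g hg h hh
  have hg' : Additive.ofMul (Abelianization.of g⁻¹) ∈ VJ b i := by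
    rw [map_inv, ofMul_inv]
    exact neg_mem (mem_Hsub.mp hg)
  have hh' : Additive.ofMul (Abelianization.of h⁻¹) ∈ VJ b i := by
    rw [map_inv, ofMul_inv]
    exact neg_mem (mem_Hsub.mp hh)
  have h0 := vj_vanish hb h2i _ hg' _ hh'
  rw [hb g⁻¹ h⁻¹] at h0
  have h1 : (QuotientGroup.mk (⟨g⁻¹⁻¹ * h⁻¹⁻¹ * g⁻¹ * h⁻¹, pcomm_mem_commutator g⁻¹ h⁻¹⟩ :
      ↥(commutator G)) : ↥(commutator G) ⧸ (gammaThree G).subgroupOf (commutator G)) = 1 := h0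
  rw [QuotientGroup.eq_one_iff, Subgroup.mem_subgroupOf] at h1
  rw [commutatorElement_def]
  simpa [inv_inv] using h1

omit hb

lemma exists_ab_rep (a : Abelianization G) : ∃ x : G, Abelianization.of x = a :=
  Quotient.exists_rep a

def abHom (α : G ≃* G) : Abelianization G →* Abelianization G :=
  Abelianization.map α.toMonoidHom

def abEquiv (α : G ≃* G) : VAb G ≃+ VAb G :=
  MulEquiv.toAdditive (MonoidHom.toMulEquiv (abHom α) (abHom α.symm)
    (by
      apply MonoidHom.ext
      intro a
      obtain ⟨x, rfl⟩ := exists_ab_rep a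
      simp [abHom, Abelianization.map_of])
    (by
      apply MonoidHom.ext
      intro a
      obtain ⟨x, rfl⟩ := exists_ab_rep a
      simp [abHom, Abelianization.map_of]))

lemma abEquiv_of (α : G ≃* G) (x : G) :
    abEquiv α (Additive.ofMul (Abelianization.of x)) =
      Additive.ofMul (Abelianization.of (α x)) := by
  apply congrArg Additive.ofMul
  exact Abelianization.map_of α.toMonoidHom x

lemma map_commutator_eq_aut (α : G ≃* G) :
    (commutator G).map α.toMonoidHom = commutator G := by
  rw [commutator_def, Subgroup.map_commutator,
    Subgroup.map_top_of_surjective _ α.surjective]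

lemma mem_commutator_map (α : G ≃* G) {c : G} (hc : c ∈ commutator G) :
    α c ∈ commutator G := by
  rw [← map_commutator_eq_aut α]
  exact Subgroup.mem_map_of_mem _ hc

lemma map_gammaThree_eq (α : G ≃* G) :
    (gammaThree G).map α.toMonoidHom = gammaThree G := by
  show Subgroup.map _ ⁅commutator G, ⊤⁆ = gammaThree G
  rw [Subgroup.map_commutator, Subgroup.map_top_of_surjective _ α.surjective,
    map_commutator_eq_aut]
  rfl

def commRestrict (α : G ≃* G) : ↥(commutator G) →* ↥(commutator G) :=
  (α.toMonoidHom.comp (commutator G).subtype).codRestrict _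
    (fun c => mem_commutator_map α c.2)

def psiHom (α : G ≃* G) :
    (↥(commutator G) ⧸ (gammaThree G).subgroupOf (commutator G)) →*
      (↥(commutator G) ⧸ (gammaThree G).subgroupOf (commutator G)) :=
  QuotientGroup.map _ _ (commRestrict α) (by
    intro c hc
    rw [Subgroup.mem_subgroupOf] at hc
    rw [Subgroup.mem_comap, Subgroup.mem_subgroupOf]
    show α (c : G) ∈ gammaThree G
    rw [← map_gammaThree_eq α]
    exact Subgroup.mem_map_of_mem _ hc)

include hb

lemma b_compat (α : G ≃* G) (u v : VAb G) :
    b (abEquiv α u) (abEquiv α v) =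
      Additive.ofMul (psiHom α (Additive.toMul (b u v))) := by
  obtain ⟨x, rfl⟩ := exists_of_rep u
  obtain ⟨y, rfl⟩ := exists_of_rep v
  rw [abEquiv_of, abEquiv_of, hb (α x) (α y), hb x y]
  apply congrArg Additive.ofMul
  show _ = psiHom α (QuotientGroup.mk _)
  rw [psiHom, QuotientGroup.map_mk]
  apply congrArg QuotientGroup.mk
  ext
  show (α x)⁻¹ * (α y)⁻¹ * α x * α y = α (x⁻¹ * y⁻¹ * x * y)
  simp [map_mul]

def tauA (α : G ≃* G) (P : ↥(AdjointRing b)) : ↥(AdjointRing b) :=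
  ⟨(((abEquiv α).toAddMonoidHom.comp P.val.1).comp (abEquiv α).symm.toAddMonoidHom,
    MulOpposite.op (((abEquiv α).toAddMonoidHom.comp P.val.2.unop).comp
      (abEquiv α).symm.toAddMonoidHom)), by
    intro u v
    show b (abEquiv α (P.val.1 ((abEquiv α).symm u))) v =
      b u (abEquiv α (P.val.2.unop ((abEquiv α).symm v)))
    calc b (abEquiv α (P.val.1 ((abEquiv α).symm u))) v
        = b (abEquiv α (P.val.1 ((abEquiv α).symm u)))
            (abEquiv α ((abEquiv α).symm v)) := by
          rw [AddEquiv.apply_symm_apply]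
      _ = Additive.ofMul (psiHom α (Additive.toMul
            (b (P.val.1 ((abEquiv α).symm u)) ((abEquiv α).symm v)))) := b_compat hb α _ _
      _ = Additive.ofMul (psiHom α (Additive.toMul
            (b ((abEquiv α).symm u) (P.val.2.unop ((abEquiv α).symm v))))) := by
          rw [adj_prop P]
      _ = b (abEquiv α ((abEquiv α).symm u))
            (abEquiv α (P.val.2.unop ((abEquiv α).symm v))) := (b_compat hb α _ _).symm
      _ = b u (abEquiv α (P.val.2.unop ((abEquiv α).symm v))) := by
          rw [AddEquiv.apply_symm_apply]⟩

lemma tau_add (α : G ≃* G) (P Q : ↥(AdjointRing b)) :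
    tauA hb α (P + Q) = tauA hb α P + tauA hb α Q := by
  apply Subtype.ext
  apply Prod.ext
  · apply AddMonoidHom.ext
    intro u
    show abEquiv α (P.val.1 ((abEquiv α).symm u) + Q.val.1 ((abEquiv α).symm u)) =
      abEquiv α (P.val.1 ((abEquiv α).symm u)) + abEquiv α (Q.val.1 ((abEquiv α).symm u))
    exact map_add _ _ _
  · refine MulOpposite.unop_injective ?_
    apply AddMonoidHom.ext
    intro v
    show abEquiv α (P.val.2.unop ((abEquiv α).symm v) + Q.val.2.unop ((abEquiv α).symm v)) =
      abEquiv α (P.val.2.unop ((abEquiv α).symm v)) +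
        abEquiv α (Q.val.2.unop ((abEquiv α).symm v))
    exact map_add _ _ _

lemma tau_mul (α : G ≃* G) (P Q : ↥(AdjointRing b)) :
    tauA hb α (P * Q) = tauA hb α P * tauA hb α Q := by
  apply Subtype.ext
  apply Prod.ext
  · apply AddMonoidHom.ext
    intro u
    show abEquiv α (P.val.1 (Q.val.1 ((abEquiv α).symm u))) =
      abEquiv α (P.val.1 ((abEquiv α).symm (abEquiv α (Q.val.1 ((abEquiv α).symm u)))))
    rw [AddEquiv.symm_apply_apply]
  · refine MulOpposite.unop_injective ?_
    apply AddMonoidHom.ext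
    intro v
    show abEquiv α (Q.val.2.unop (P.val.2.unop ((abEquiv α).symm v))) =
      abEquiv α (Q.val.2.unop ((abEquiv α).symm (abEquiv α (P.val.2.unop ((abEquiv α).symm v)))))
    rw [AddEquiv.symm_apply_apply]

lemma tau_one (α : G ≃* G) : tauA hb α (1 : ↥(AdjointRing b)) = 1 := by
  apply Subtype.ext
  apply Prod.ext
  · apply AddMonoidHom.ext
    intro u
    exact (abEquiv α).apply_symm_apply u
  · refine MulOpposite.unop_injective ?_
    apply AddMonoidHom.ext
    intro v
    exact (abEquiv α).apply_symm_apply v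

lemma isUnit_tau (α : G ≃* G) {P : ↥(AdjointRing b)} (h : IsUnit P) :
    IsUnit (tauA hb α P) := by
  obtain ⟨⟨q, qi, h1, h2⟩, rfl⟩ := h
  exact ⟨⟨tauA hb α q, tauA hb α qi,
    by rw [← tau_mul, h1, tau_one], by rw [← tau_mul, h2, tau_one]⟩, rfl⟩

omit hb in
lemma abEquiv_comp (α : G ≃* G) (z : VAb G) : abEquiv α (abEquiv α.symm z) = z := by
  obtain ⟨x, rfl⟩ := exists_of_rep z
  rw [abEquiv_of, abEquiv_of, MulEquiv.apply_symm_apply]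

omit hb in
lemma abEquiv_symm_comp (α : G ≃* G) (u : VAb G) :
    (abEquiv α.symm).symm ((abEquiv α).symm u) = u := by
  have h := abEquiv_comp α ((abEquiv α.symm).symm ((abEquiv α).symm u))
  rw [AddEquiv.apply_symm_apply, AddEquiv.apply_symm_apply] at h
  exact h.symm

lemma tau_tau (α : G ≃* G) (P : ↥(AdjointRing b)) :
    tauA hb α (tauA hb α.symm P) = P := by
  apply Subtype.ext
  apply Prod.ext
  · apply AddMonoidHom.ext
    intro u
    show abEquiv α (abEquiv α.symm
        (P.val.1 ((abEquiv α.symm).symm ((abEquiv α).symm u)))) = P.val.1 u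
    rw [abEquiv_comp, abEquiv_symm_comp]
  · refine MulOpposite.unop_injective ?_
    apply AddMonoidHom.ext
    intro v
    show abEquiv α (abEquiv α.symm
        (P.val.2.unop ((abEquiv α.symm).symm ((abEquiv α).symm v)))) = P.val.2.unop v
    rw [abEquiv_comp, abEquiv_symm_comp]

lemma tau_mem_jac (α : G ≃* G) {P : ↥(AdjointRing b)}
    (h : P ∈ (⊥ : Ideal ↥(AdjointRing b)).jacobson) :
    tauA hb α P ∈ (⊥ : Ideal ↥(AdjointRing b)).jacobson := by
  apply mem_jac_of_forall_isUnit
  intro y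
  have h1 : tauA hb α.symm y * P ∈ (⊥ : Ideal ↥(AdjointRing b)).jacobson :=
    Ideal.mul_mem_left _ _ h
  have h2 : IsUnit (1 + tauA hb α.symm y * P) := isUnit_one_add_of_mem_jac h1
  have h3 : IsUnit (tauA hb α.symm y * P + 1) := by rwa [add_comm] at h2
  have h4 := isUnit_tau hb α h3
  rw [tau_add, tau_mul, tau_one, tau_tau] at h4
  exact h4

lemma tau_mem_idealPow (α : G ≃* G) {i : ℕ} {P : ↥(AdjointRing b)}
    (h : P ∈ idealPow (⊥ : Ideal ↥(AdjointRing b)).jacobson i) :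
    tauA hb α P ∈ idealPow (⊥ : Ideal ↥(AdjointRing b)).jacobson i := by
  induction i generalizing P with
  | zero => exact AddSubgroup.mem_top _
  | succ n ih =>
    revert P
    have key : idealPow (⊥ : Ideal ↥(AdjointRing b)).jacobson (n + 1) ≤
        AddSubgroup.comap (AddMonoidHom.mk' (tauA hb α) (tau_add hb α))
          (idealPow (⊥ : Ideal ↥(AdjointRing b)).jacobson (n + 1)) := by
      rw [idealPow, AddSubgroup.closure_le]
      rintro _ ⟨z, hz, w, hw, rfl⟩
      simp only [SetLike.mem_coe, AddSubgroup.mem_comap]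
      show tauA hb α (z * w) ∈ _
      rw [tau_mul]
      exact mul_mem_idealPow_succ (ih hz) (tau_mem_jac hb α hw)
    exact fun P hP => key hP

lemma abEquiv_mem_VJ {i : ℕ} (α : G ≃* G) {w : VAb G} (hw : w ∈ VJ b i) :
    abEquiv α w ∈ VJ b i := by
  revert w
  have key : AddSubgroup.closure
      {w : VAb G | ∃ P : ↥(AdjointRing b),
        P ∈ idealPow (⊥ : Ideal ↥(AdjointRing b)).jacobson i ∧ ∃ u, w = P.val.1 u} ≤
      AddSubgroup.comap (abEquiv α).toAddMonoidHom (VJ b i) := by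
    rw [AddSubgroup.closure_le]
    rintro _ ⟨P, hP, u, rfl⟩
    simp only [SetLike.mem_coe, AddSubgroup.mem_comap]
    show abEquiv α (P.val.1 u) ∈ VJ b i
    have he : abEquiv α (P.val.1 u) = (tauA hb α P).val.1 (abEquiv α u) := by
      show _ = abEquiv α (P.val.1 ((abEquiv α).symm (abEquiv α u)))
      rw [AddEquiv.symm_apply_apply]
    rw [he]
    exact AddSubgroup.subset_closure ⟨tauA hb α P, tau_mem_idealPow hb α hP, abEquiv α u, rfl⟩
  exact fun w hw => key hw

lemma partA {i : ℕ} (α : G ≃* G) :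
    (Hsub b i).map α.toMonoidHom = Hsub b i := by
  ext g
  rw [Subgroup.mem_map]
  constructor
  · rintro ⟨h, hh, rfl⟩
    show Additive.ofMul (Abelianization.of (α h)) ∈ VJ b i
    rw [← abEquiv_of α h]
    exact abEquiv_mem_VJ hb α (mem_Hsub.mp hh)
  · intro hg
    refine ⟨α.symm g, ?_, α.apply_symm_apply g⟩
    show Additive.ofMul (Abelianization.of (α.symm g)) ∈ VJ b i
    rw [← abEquiv_of α.symm g]
    exact abEquiv_mem_VJ hb α.symm (mem_Hsub.mp hg)

end GroupSide

/-- (a) `H` is characteristic in `G`; (b) if `J^{2i} = 0` then `[H,H] ≤ γ₃`. -/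
theorem statement19 (i : ℕ) (b : VAb G →+ VAb G →+ WAb G)
    (hb : InducedByCommutator b) :
    (∀ α : G ≃* G, (Hsub b i).map α.toMonoidHom = Hsub b i) ∧
    (idealPow (⊥ : Ideal ↥(AdjointRing b)).jacobson (2 * i) = ⊥ →
      ⁅Hsub b i, Hsub b i⁆ ≤ gammaThree G) := by
  exact ⟨fun α => partA hb α, fun h2i => partB hb h2i⟩
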